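/- Let F be a field, N a natural number, and G an N×N matrix over F such that every square submatrix of G is invertible. Let x and x' be vectors in F^N, and let I and J be subsets of the index set {1,...,N} with |J| ≤ |I|. If x and x' agree on every coordinate outside J, and the vectors Gx and Gx' agree on every coordinate in I, then x = x'. -/
import Mathlib


/-- Every square submatrix of `G` is invertible: for every size `r` and every
injective choice of `r` rows and `r` columns, the corresponding `r × r`
submatrix has nonzero determinant. -/
def AllSquareSubmatricesInvertible {F : Type*} [Field F] {ι : Type*} [DecidableEq ι]
    (G : Matrix ι ι F) : Prop :=
  ∀ (r : ℕ) (f g : Fin r → ι), Function.Injective f → Function.Injective g →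
    (G.submatrix f g).det ≠ 0

/-- If every square submatrix of the `N × N` matrix `G` is invertible, `x` and `x'`
agree outside `J`, `G x` and `G x'` agree on `I`, and `|J| ≤ |I|`, then `x = x'`. -/
theorem eq_of_agree_outside_and_mulVec_agree
    {F : Type*} [Field F] {N : ℕ} (G : Matrix (Fin N) (Fin N) F)
    (hG : AllSquareSubmatricesInvertible G)
    (x x' : Fin N → F) (I J : Finset (Fin N))
    (hcard : J.card ≤ I.card)
    (hout : ∀ i, i ∉ J → x i = x' i)
    (hin : ∀ i ∈ I, G.mulVec x i = G.mulVec x' i) :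
    x = x' := by
  classical
  set d : Fin N → F := x - x' with hd
  have hdJ : ∀ i, i ∉ J → d i = 0 := fun i hi => by
    simp [hd, sub_eq_zero, hout i hi]
  have hGd : ∀ i ∈ I, G.mulVec d i = 0 := by
    intro i hi
    have := hin i hi
    simp [hd, Matrix.mulVec_sub, this, sub_eq_zero]
  obtain ⟨I', hI'sub, hI'card⟩ := Finset.exists_subset_card_eq hcard
  set r := J.card with hr
  let f : Fin r → Fin N := fun k => (I'.orderIsoOfFin hI'card k : Fin N)
  let g : Fin r → Fin N := fun k => (J.orderIsoOfFin hr.symm k : Fin N)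
  have hfinj : Function.Injective f := fun a b h =>
    (I'.orderIsoOfFin hI'card).injective (Subtype.ext h)
  have hginj : Function.Injective g := fun a b h =>
    (J.orderIsoOfFin hr.symm).injective (Subtype.ext h)
  have hdet := hG r f g hfinj hginj
  set M := G.submatrix f g with hM
  set v : Fin r → F := d ∘ g with hv
  have hMv : M.mulVec v = 0 := by
    funext k
    have hfk : f k ∈ I := hI'sub (I'.orderIsoOfFin hI'card k).2
    have h0 := hGd (f k) hfk
    have hsum : G.mulVec d (f k) = ∑ l, G (f k) (g l) * d (g l) := by
      rw [Matrix.mulVec, dotProduct]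
      rw [← Finset.sum_subset (Finset.subset_univ J)]
      · rw [← Finset.sum_coe_sort J (fun j => G (f k) j * d j)]
        have hge : ∀ j : J, g ((J.orderIsoOfFin hr.symm).toEquiv.symm j) = (j : Fin N) :=
          fun j => congrArg Subtype.val ((J.orderIsoOfFin hr.symm).toEquiv.apply_symm_apply j)
        exact Fintype.sum_equiv (J.orderIsoOfFin hr.symm).toEquiv.symm _ _
          (fun j => by rw [hge])
      · intro j _ hj
        simp [hdJ j hj]
    simp only [Matrix.mulVec, dotProduct, hM, Matrix.submatrix_apply, hv,
      Function.comp] at *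
    rw [← hsum, h0]
    rfl
  have hv0 : v = 0 := by
    have hu : IsUnit M := (Matrix.isUnit_iff_isUnit_det M).mpr (Ne.isUnit hdet)
    have := Matrix.mulVec_injective_iff_isUnit.mpr hu
    apply this
    rw [hMv, Matrix.mulVec_zero]
  have hd0 : d = 0 := by
    funext i
    by_cases hi : i ∈ J
    · have : i = g ((J.orderIsoOfFin hr.symm).symm ⟨i, hi⟩) := by
        show i = ((J.orderIsoOfFin hr.symm) ((J.orderIsoOfFin hr.symm).symm ⟨i, hi⟩) : Fin N)
        rw [OrderIso.apply_symm_apply]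
      rw [this]
      have := congrFun hv0 ((J.orderIsoOfFin hr.symm).symm ⟨i, hi⟩)
      simpa [hv] using this
    · exact hdJ i hi
  have := sub_eq_zero.mp hd0
  exact this
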